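/- Let s ≥ 1, K ≥ 1, h ∈ ℝ. Let Ã = (ã_{ij}) and A = (a_{ij}) be real s×s matrices and ω = (ω_i) a real vector with ω_i ≠ 0 for all i; set ω̃ = ω and define α_{ij} = ω_j − (ω_j/ω_i) ã_{ji} and β_{ij} = ω_j − (ω_j/ω_i) a_{ji}. For linear maps a, b : ℝ^{2K} → ℝ^K define (a ∧ b)(u,v) := ⟨a(u), b(v)⟩ − ⟨a(v), b(u)⟩. For each i = 1,…,s let F_i, G_i be real K×K matrices, let S_i, R_i be symmetric real K×K matrices, and let dy0, dp0, dY_i, dP̃_i, dP_i : ℝ^{2K} → ℝ^K be linear maps. Define dT_i := F_i ∘ dY_i, dL_i := G_i ∘ dY_i, dQ_i := S_i ∘ dY_i + F_i^T ∘ dP̃_i, dV_i := R_i ∘ dY_i + G_i^T ∘ dP_i, and assume the variational equations: dY_i = dy0 + h Σ_{j=1}^s ã_{ij} dT_j + h Σ_{j=1}^s a_{ij} dL_j, dP̃_i = dp0 − h Σ_{j=1}^s α_{ij} (dQ_j + dV_j), dP_i = dp0 − h Σ_{j=1}^s β_{ij} (dQ_j + dV_j) for all i. Define dy1 := dy0 +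 h Σ_{i=1}^s ω_i (dT_i + dL_i) and dp1 := dp0 − h Σ_{i=1}^s ω_i (dQ_i + dV_i). Then dy1 ∧ dp1 = dy0 ∧ dp0 as bilinear forms on ℝ^{2K} × ℝ^{2K}. -/

import Mathlib

open Matrix BigOperators Finset

/-- The wedge of two maps `a, b : ℝ^{2K} → ℝ^K`:
`(a ∧ b)(u,v) = ⟨a(u), b(v)⟩ − ⟨a(v), b(u)⟩`. -/
def wedge {K : ℕ} (a b : (Fin (2 * K) → ℝ) →ₗ[ℝ] (Fin K → ℝ))
    (u v : Fin (2 * K) → ℝ) : ℝ :=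
  a u ⬝ᵥ b v - a v ⬝ᵥ b u

lemma mulVec_dot {K : ℕ} (M : Matrix (Fin K) (Fin K) ℝ) (x y : Fin K → ℝ) :
    (M *ᵥ x) ⬝ᵥ y = x ⬝ᵥ (Mᵀ *ᵥ y) := by
  rw [Matrix.dotProduct_mulVec, Matrix.vecMul_transpose]

noncomputable def E {K : ℕ} (u v : Fin (2 * K) → ℝ) :
    ((Fin (2 * K) → ℝ) →ₗ[ℝ] (Fin K → ℝ)) →ₗ[ℝ]
      ((Fin (2 * K) → ℝ) →ₗ[ℝ] (Fin K → ℝ)) →ₗ[ℝ] ℝ :=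
  LinearMap.mk₂ ℝ (fun a b => a u ⬝ᵥ b v - a v ⬝ᵥ b u)
    (by intros; simp [add_dotProduct]; ring)
    (by intros; simp [smul_dotProduct, smul_eq_mul]; ring)
    (by intros; simp [dotProduct_add]; ring)
    (by intros; simp [dotProduct_smul, smul_eq_mul]; ring)

lemma E_comp {K : ℕ} (u v : Fin (2 * K) → ℝ) (M : Matrix (Fin K) (Fin K) ℝ)
    (a b : (Fin (2 * K) → ℝ) →ₗ[ℝ] (Fin K → ℝ)) :
    E u v (M.mulVecLin ∘ₗ a) b = E u v a (Mᵀ.mulVecLin ∘ₗ b) := by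
  simp [E, mulVec_dot, Matrix.mulVec_transpose]

lemma E_symm_zero {K : ℕ} (u v : Fin (2 * K) → ℝ) (M : Matrix (Fin K) (Fin K) ℝ)
    (hM : M.IsSymm) (a : (Fin (2 * K) → ℝ) →ₗ[ℝ] (Fin K → ℝ)) :
    E u v a (M.mulVecLin ∘ₗ a) = 0 := by
  simp only [E, LinearMap.mk₂_apply, LinearMap.comp_apply, Matrix.mulVecLin_apply]
  rw [show a u ⬝ᵥ M *ᵥ a v = (Mᵀ *ᵥ a u) ⬝ᵥ a v from (mulVec_dot _ _ _).symm, hM.eq,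
    dotProduct_comm]
  ring

lemma cancel_aux {n : ℕ} (w : Fin n → ℝ) (hw : ∀ i, w i ≠ 0)
    (B : Matrix (Fin n) (Fin n) ℝ) (t : Fin n → Fin n → ℝ) :
    ∑ i, ∑ j, (w i * ((w j - w j / w i * B j i) * t i j)
      + w i * (B i j * t j i) - w i * (w j * t j i)) = 0 := by
  have hz : ∀ i j : Fin n, w i * ((w j - w j / w i * B j i) * t i j)
      + w j * (B j i * t i j) - w j * (w i * t i j) = 0 := by
    intro i j
    field_simp [hw i]
    ring
  have hc1 : (∑ i, ∑ j, w i * (B i j * t j i))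
      = ∑ i, ∑ j, w j * (B j i * t i j) := Finset.sum_comm
  have hc2 : (∑ i, ∑ j, w i * (w j * t j i))
      = ∑ i, ∑ j, w j * (w i * t i j) := Finset.sum_comm
  simp only [Finset.sum_add_distrib, Finset.sum_sub_distrib]
  rw [hc1, hc2]
  simp only [← Finset.sum_add_distrib, ← Finset.sum_sub_distrib]
  exact Finset.sum_eq_zero fun i _ => Finset.sum_eq_zero fun j _ => hz i j

lemma main_alg {n : ℕ} (h : ℝ) (w : Fin n → ℝ) (hw : ∀ i, w i ≠ 0)
    (At A : Matrix (Fin n) (Fin n) ℝ)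
    (a b T0 L0 Y0 : Fin n → ℝ) (t l : Fin n → Fin n → ℝ) (e0 : ℝ)
    (hT0 : ∀ i, T0 i = a i + h * ∑ j, (w j - w j / w i * At j i) * t i j)
    (hL0 : ∀ i, L0 i = b i + h * ∑ j, (w j - w j / w i * A j i) * l i j)
    (hY0 : ∀ i, Y0 i = a i + b i - h * ∑ j, At i j * t j i - h * ∑ j, A i j * l j i) :
    e0 + h * ∑ i, w i * (T0 i + L0 i)
      - h * ∑ i, w i * (Y0 i + h * ∑ j, w j * (t j i + l j i)) = e0 := by
  have exp : ∀ i, w i * (T0 i + L0 i) - w i * (Y0 i + h * ∑ j, w j * (t j i + l j i))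
      = h * ∑ j, ((w i * ((w j - w j / w i * At j i) * t i j)
          + w i * (At i j * t j i) - w i * (w j * t j i))
        + (w i * ((w j - w j / w i * A j i) * l i j)
          + w i * (A i j * l j i) - w i * (w j * l j i))) := by
    intro i
    rw [hT0 i, hL0 i, hY0 i]
    simp only [Finset.mul_sum, Finset.sum_add_distrib, Finset.sum_sub_distrib,
      mul_add, mul_sub, add_mul, sub_mul]
    ring_nf
    simp only [mul_comm, mul_left_comm, mul_assoc]
    ring
  have hXY : ∑ i, w i * (T0 i + L0 i)
      - ∑ i, w i * (Y0 i + h * ∑ j, w j * (t j i + l j i))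
      = h * ∑ i, ∑ j, ((w i * ((w j - w j / w i * At j i) * t i j)
          + w i * (At i j * t j i) - w i * (w j * t j i))
        + (w i * ((w j - w j / w i * A j i) * l i j)
          + w i * (A i j * l j i) - w i * (w j * l j i))) := by
    rw [← Finset.sum_sub_distrib, Finset.mul_sum]
    exact Finset.sum_congr rfl fun i _ => exp i
  have hD0 : (∑ i, ∑ j, ((w i * ((w j - w j / w i * At j i) * t i j)
          + w i * (At i j * t j i) - w i * (w j * t j i))
        + (w i * ((w j - w j / w i * A j i) * l i j)
          + w i * (A i j * l j i) - w i * (w j * l j i)))) = 0 := by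
    simp only [Finset.sum_add_distrib]
    rw [show (∑ i, ∑ j, (w i * ((w j - w j / w i * At j i) * t i j)
          + w i * (At i j * t j i) - w i * (w j * t j i))) = 0 from cancel_aux w hw At t,
      show (∑ i, ∑ j, (w i * ((w j - w j / w i * A j i) * l i j)
          + w i * (A i j * l j i) - w i * (w j * l j i))) = 0 from cancel_aux w hw A l]
    ring
  linear_combination h * hXY + h * h * hD0

/-- Linearized form of Theorem 3.2 (symplecticity): with `ω̃ = ω`, `ω_i ≠ 0`,
adjoint coefficients `α_{ij} = ω_j − (ω_j/ω_i) ã_{ji}`, `β_{ij} = ω_j − (ω_j/ω_i) a_{ji}`,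
and the variational equations of (SRK-1)/(ARK-2), the scheme preserves the symplectic
two-form over one step: `dy1 ∧ dp1 = dy0 ∧ dp0`. -/
theorem imex_symplectic
    (s K : ℕ) (hs : 1 ≤ s) (hK : 1 ≤ K) (h : ℝ)
    (At A : Matrix (Fin s) (Fin s) ℝ) (w : Fin s → ℝ) (hw : ∀ i, w i ≠ 0)
    (F G S R : Fin s → Matrix (Fin K) (Fin K) ℝ)
    (hS : ∀ i, (S i).IsSymm) (hR : ∀ i, (R i).IsSymm)
    (dy0 dp0 : (Fin (2 * K) → ℝ) →ₗ[ℝ] (Fin K → ℝ))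
    (dY dPt dP : Fin s → ((Fin (2 * K) → ℝ) →ₗ[ℝ] (Fin K → ℝ)))
    (dT dL dQ dV : Fin s → ((Fin (2 * K) → ℝ) →ₗ[ℝ] (Fin K → ℝ)))
    (hT : ∀ i, dT i = (F i).mulVecLin ∘ₗ dY i)
    (hL : ∀ i, dL i = (G i).mulVecLin ∘ₗ dY i)
    (hQ : ∀ i, dQ i = (S i).mulVecLin ∘ₗ dY i + (F i)ᵀ.mulVecLin ∘ₗ dPt i)
    (hV : ∀ i, dV i = (R i).mulVecLin ∘ₗ dY i + (G i)ᵀ.mulVecLin ∘ₗ dP i)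
    (hY : ∀ i, dY i = dy0 + h • ∑ j, At i j • dT j + h • ∑ j, A i j • dL j)
    (hPt : ∀ i, dPt i
      = dp0 - h • ∑ j, (w j - w j / w i * At j i) • (dQ j + dV j))
    (hP : ∀ i, dP i
      = dp0 - h • ∑ j, (w j - w j / w i * A j i) • (dQ j + dV j))
    (dy1 dp1 : (Fin (2 * K) → ℝ) →ₗ[ℝ] (Fin K → ℝ))
    (hy1 : dy1 = dy0 + h • ∑ i, w i • (dT i + dL i))
    (hp1 : dp1 = dp0 - h • ∑ i, w i • (dQ i + dV i)) :
    ∀ u v : Fin (2 * K) → ℝ, wedge dy1 dp1 u v = wedge dy0 dp0 u v := by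
  intro u v
  have hwe : ∀ a b, wedge a b u v = E u v a b := fun _ _ => rfl
  obtain ⟨C, hC⟩ : ∃ C : Fin s → ((Fin (2 * K) → ℝ) →ₗ[ℝ] (Fin K → ℝ)),
      ∀ i, dQ i + dV i = C i := ⟨_, fun _ => rfl⟩
  have hD : ∀ i, E u v (dY i) (C i)
      = E u v (dT i) (dPt i) + E u v (dL i) (dP i) := by
    intro i
    rw [← hC i, hQ i, hV i, hT i, hL i, E_comp, E_comp, map_add, map_add, map_add,
      E_symm_zero u v (S i) (hS i) (dY i), E_symm_zero u v (R i) (hR i) (dY i)]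
    ring
  have hT0 : ∀ i, E u v (dT i) dp0
      = E u v (dT i) (dPt i)
        + h * ∑ j, (w j - w j / w i * At j i) * E u v (dT i) (C j) := by
    intro i
    have e1 : dp0 = dPt i + h • ∑ j, (w j - w j / w i * At j i) • C j := by
      rw [hPt i]; simp only [hC]; abel
    rw [e1]
    simp only [map_add, _root_.map_smul, _root_.map_sum, smul_eq_mul, Finset.mul_sum]
  have hL0 : ∀ i, E u v (dL i) dp0
      = E u v (dL i) (dP i)
        + h * ∑ j, (w j - w j / w i * A j i) * E u v (dL i) (C j) := by
    intro i
    have e1 : dp0 = dP i + h • ∑ j, (w j - w j / w i * A j i) • C j := by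
      rw [hP i]; simp only [hC]; abel
    rw [e1]
    simp only [map_add, _root_.map_smul, _root_.map_sum, smul_eq_mul, Finset.mul_sum]
  have hY0 : ∀ i, E u v dy0 (C i)
      = E u v (dT i) (dPt i) + E u v (dL i) (dP i)
        - h * ∑ j, At i j * E u v (dT j) (C i)
        - h * ∑ j, A i j * E u v (dL j) (C i) := by
    intro i
    have e2 : dy0 = dY i - h • ∑ j, At i j • dT j - h • ∑ j, A i j • dL j := by
      rw [hY i]; abel
    rw [e2]
    simp only [map_sub, _root_.map_smul, _root_.map_sum, LinearMap.sub_apply,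
      LinearMap.smul_apply, LinearMap.sum_apply, smul_eq_mul, Finset.mul_sum]
    rw [hD i]
  rw [hwe, hwe, hy1, hp1]
  simp only [hC]
  simp only [map_add, map_sub, _root_.map_smul, _root_.map_sum, LinearMap.add_apply,
    LinearMap.sub_apply, LinearMap.smul_apply, LinearMap.sum_apply, smul_eq_mul]
  exact main_alg h w hw At A (fun i => E u v (dT i) (dPt i))
    (fun i => E u v (dL i) (dP i)) (fun i => E u v (dT i) dp0)
    (fun i => E u v (dL i) dp0) (fun i => E u v dy0 (C i))
    (fun i j => E u v (dT i) (C j)) (fun i j => E u v (dL i) (C j))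
    (E u v dy0 dp0) hT0 hL0 hY0
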